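/- If a monoid M acts on a set X by injections and the action has finite big Ramsey degree t, then there exists a big Ramsey colouring χ : X → [t], i.e., a colouring with t colours that is both persistent and universal. -/
import Mathlib


/-- The action colouring-theoretic statement: every finite colouring takes at most `t`
values on some set `p • X`. -/
def HasDegLE (M X : Type) [Monoid M] [MulAction M X] (t : ℕ) : Prop :=
  ∀ (l : ℕ) (ψ : X → Fin l), ∃ p : M,
    (ψ '' Set.range (fun x : X => p • x)).ncard ≤ t

/-- `χ` is persistent: it attains all `k` colours on every `p • X`. -/
def Persistent (M X : Type) [Monoid M] [MulAction M X] {k : ℕ} (χ : X → Fin k) : Prop :=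
  ∀ p : M, Set.range (fun x : X => χ (p • x)) = Set.univ

/-- `χ` is universal: every colouring factors through `χ` on some `p*q • X`. -/
def UniversalCol (M X : Type) [Monoid M] [MulAction M X] {k : ℕ} (χ : X → Fin k) : Prop :=
  ∀ (l : ℕ) (ψ : X → Fin l) (p : M), ∃ (q : M) (f : Fin k → Fin l),
    ∀ x : X, ψ ((p * q) • x) = f (χ ((p * q) • x))

theorem exists_bigRamseyColouring_of_finite_degree
    (M X : Type) [Monoid M] [MulAction M X]
    (hinj : ∀ p : M, Function.Injective (fun x : X => p • x))
    (t : ℕ) (ht : 1 ≤ t) (hdeg : HasDegLE M X t)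
    (hmin : ∀ s : ℕ, HasDegLE M X s → t ≤ s) :
    ∃ χ : X → Fin t, Persistent M X χ ∧ UniversalCol M X χ := by
  unfold HasDegLE at hdeg hmin
  unfold Persistent UniversalCol
  classical
  have hfail : ¬ (∀ (l : ℕ) (ψ : X → Fin l), ∃ p : M,
      (ψ '' Set.range (fun x : X => p • x)).ncard ≤ t - 1) := by
    intro h
    have := hmin (t - 1) h
    omega
  push_neg at hfail
  obtain ⟨l, ψ, hψ⟩ := hfail
  have hψ' : ∀ p : M, t ≤ (ψ '' Set.range (fun x : X => p • x)).ncard := by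
    intro p
    have := hψ p
    omega
  obtain ⟨p₀, hp₀⟩ := hdeg l ψ
  set S₀ : Set (Fin l) := ψ '' Set.range (fun x : X => p₀ • x) with hS₀def
  have hfin : S₀.Finite := Set.toFinite _
  have hcard : S₀.ncard = t := le_antisymm hp₀ (hψ' p₀)
  have hkey : ∀ p : M, ψ '' Set.range (fun x : X => (p₀ * p) • x) = S₀ := by
    intro p
    apply Set.eq_of_subset_of_ncard_le
    · rintro a ⟨y, ⟨x, rfl⟩, rfl⟩
      exact ⟨p₀ • (p • x), ⟨p • x, rfl⟩, by simp [mul_smul]⟩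
    · rw [hcard]; exact hψ' (p₀ * p)
    · exact hfin
  -- build χ
  have hcard' : Nat.card S₀ = t := by rw [Nat.card_coe_set_eq, hcard]
  have : Finite S₀ := hfin
  let e : S₀ ≃ Fin t := Finite.equivFinOfCardEq hcard'
  let g : Fin l → Fin t := fun a => if h : a ∈ S₀ then e ⟨a, h⟩ else ⟨0, ht⟩
  let χ : X → Fin t := fun x => g (ψ (p₀ • x))
  have hpers : ∀ p : M, Set.range (fun x : X => χ (p • x)) = Set.univ := by
    intro p
    apply Set.eq_univ_of_forall
    intro c
    have ha : (e.symm c : Fin l) ∈ ψ '' Set.range (fun x : X => (p₀ * p) • x) := by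
      rw [hkey p]; exact (e.symm c).2
    obtain ⟨y, ⟨x, rfl⟩, hya⟩ := ha
    refine ⟨x, ?_⟩
    show g (ψ (p₀ • (p • x))) = c
    rw [← mul_smul, hya]
    have hmem : (e.symm c : Fin l) ∈ S₀ := (e.symm c).2
    simp only [g, dif_pos hmem]
    have : (⟨(e.symm c : Fin l), hmem⟩ : S₀) = e.symm c := rfl
    rw [this, Equiv.apply_symm_apply]
  refine ⟨χ, hpers, ?_⟩
  intro l' ψ' p
  obtain ⟨q, hq⟩ := hdeg (t * l') (fun x => finProdFinEquiv (χ (p • x), ψ' (p • x)))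
  set S : Set (Fin t × Fin l') :=
    (fun x => (χ x, ψ' x)) '' Set.range (fun x : X => (p * q) • x) with hSdef
  have himg : (fun x => finProdFinEquiv (χ (p • x), ψ' (p • x))) ''
      Set.range (fun x : X => q • x) = finProdFinEquiv '' S := by
    ext a
    constructor
    · rintro ⟨y, ⟨x, rfl⟩, rfl⟩
      exact ⟨(χ ((p * q) • x), ψ' ((p * q) • x)), ⟨(p * q) • x, ⟨x, rfl⟩, rfl⟩,
        by simp [mul_smul]⟩
    · rintro ⟨b, ⟨y, ⟨x, rfl⟩, rfl⟩, rfl⟩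
      exact ⟨q • x, ⟨x, rfl⟩, by simp [mul_smul]⟩
  rw [himg, Set.ncard_image_of_injective _ finProdFinEquiv.injective] at hq
  have hfst : Prod.fst '' S = Set.univ := by
    apply Set.eq_univ_of_forall
    intro c
    have := hpers (p * q)
    have hc : c ∈ Set.range (fun x : X => χ ((p * q) • x)) := by rw [this]; trivial
    obtain ⟨x, hx⟩ := hc
    exact ⟨(χ ((p * q) • x), ψ' ((p * q) • x)), ⟨(p * q) • x, ⟨x, rfl⟩, rfl⟩, hx⟩
  have hfstcard : (Prod.fst '' S).ncard = t := by
    rw [hfst, Set.ncard_univ, Nat.card_eq_fintype_card, Fintype.card_fin]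
  have hScard : S.ncard = t := by
    have h1 : (Prod.fst '' S).ncard ≤ S.ncard := Set.ncard_image_le (Set.toFinite _)
    omega
  have hinjOn : Set.InjOn Prod.fst S :=
    Set.injOn_of_ncard_image_eq (by rw [hfstcard, hScard]) (Set.toFinite _)
  have hc : ∀ c : Fin t, ∃ x : X, χ ((p * q) • x) = c := by
    intro c
    have := hpers (p * q)
    have hc : c ∈ Set.range (fun x : X => χ ((p * q) • x)) := by rw [this]; trivial
    exact hc
  choose xs hxs using hc
  refine ⟨q, fun c => ψ' ((p * q) • xs c), ?_⟩
  intro x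
  set c := χ ((p * q) • x) with hcdef
  have h₁ : (χ ((p * q) • x), ψ' ((p * q) • x)) ∈ S := ⟨(p * q) • x, ⟨x, rfl⟩, rfl⟩
  have h₂ : (χ ((p * q) • xs c), ψ' ((p * q) • xs c)) ∈ S :=
    ⟨(p * q) • xs c, ⟨xs c, rfl⟩, rfl⟩
  have heq := hinjOn h₁ h₂ (by simp [hxs c, ← hcdef])
  exact congrArg Prod.snd heq
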